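/- Let H be a hypertree with hyperedges of size at most three. Then the size-three hyperedges of H can each be shrunk to a size-two edge contained in them so that the resulting graph is a spanning tree T' with deg_{T'}(v) ≥ deg_H(v)/100 for every vertex v, where deg_H(v) counts the hyperedges of H containing v. -/
import Mathlib


/-- Adjacency in a hypergraph with hyperedges given as multisets. -/
def HAdj {V E : Type} (edges : E → Multiset V) (u v : V) : Prop :=
  ∃ e : E, u ∈ edges e ∧ v ∈ edges e

/-- The hypergraph is connected. -/
def HConn {V E : Type} (edges : E → Multiset V) : Prop :=
  ∀ u v : V, Relation.ReflTransGen (HAdj edges) u v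

/-- The hyperedges form a hypertree: `|V| - 1` hyperedges, every vertex covered,
and at most `|X| - 1` hyperedges inside any `X ⊆ V`. -/
def IsHypertree {V E : Type} [Fintype V] [Fintype E]
    (edges : E → Multiset V) : Prop :=
  Fintype.card E = Fintype.card V - 1 ∧
  (∀ v : V, ∃ e : E, v ∈ edges e) ∧
  ∀ X : Set V,
    Nat.card {e : E // ∀ x ∈ edges e, x ∈ X} ≤ Nat.card X - 1

section Stmt14Aux

open Finset
set_option linter.unusedSectionVars false

variable {V E : Type} [Fintype V] [Fintype E]

/-- Edges of `g` entirely inside the vertex set `X`. -/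
noncomputable def stmt14inside (g : E → Multiset V) (X : Finset V) : Finset E :=
  @Finset.filter _ (fun e => ∀ x ∈ g e, x ∈ X) (Classical.decPred _) univ

lemma stmt14_mem_inside {g : E → Multiset V} {X : Finset V} {e : E} :
    e ∈ stmt14inside g X ↔ ∀ x ∈ g e, x ∈ X := by simp [stmt14inside]

/-- The hyperforest condition. -/
def Stmt14Inv (g : E → Multiset V) : Prop :=
  ∀ X : Finset V, X.Nonempty → (stmt14inside g X).card + 1 ≤ X.card

lemma stmt14_inside_mono {g : E → Multiset V} {X Y : Finset V} (h : X ⊆ Y) :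
    stmt14inside g X ⊆ stmt14inside g Y := by
  intro e he
  rw [stmt14_mem_inside] at he ⊢
  exact fun x hx => h (he x hx)

lemma stmt14_pair_le {s : Multiset V} {x y : V} (hx : x ∈ s) (hy : y ∈ s) (hxy : x ≠ y) :
    ({x, y} : Multiset V) ≤ s := by
  classical
  rw [Multiset.le_iff_count]
  intro a
  have hcount : Multiset.count a ({x, y} : Multiset V) =
      (if a = x then 1 else 0) + (if a = y then 1 else 0) := by
    simp [Multiset.insert_eq_cons, Multiset.count_cons, Multiset.count_singleton]
    split_ifs <;> simp
  rw [hcount]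
  rcases eq_or_ne a x with rfl | hax
  · rw [if_pos rfl, if_neg hxy]
    simpa [Multiset.one_le_count_iff_mem] using hx
  · rw [if_neg hax]
    rcases eq_or_ne a y with rfl | hay
    · rw [if_pos rfl]
      simpa [Multiset.one_le_count_iff_mem] using hy
    · rw [if_neg hay]
      simp

/-- Lovász-type exchange: two "tight blockers" for two different shrinks of one
triple are impossible. -/
lemma stmt14_exchange {g : E → Multiset V} (hInv : Stmt14Inv g) {e₀ : E} {α c₁ c₂ : V}
    (hmem : ∀ x ∈ g e₀, x = α ∨ x = c₁ ∨ x = c₂)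
    (hc₁mem : c₁ ∈ g e₀) (hc₂mem : c₂ ∈ g e₀)
    {X₁ X₂ : Finset V}
    (hα₁ : α ∈ X₁) (hc₂₁ : c₂ ∈ X₁) (hc₁₁ : c₁ ∉ X₁)
    (hα₂ : α ∈ X₂) (hc₁₂ : c₁ ∈ X₂) (hc₂₂ : c₂ ∉ X₂)
    (ht₁ : (stmt14inside g X₁).card + 1 = X₁.card)
    (ht₂ : (stmt14inside g X₂).card + 1 = X₂.card) : False := by
  classical
  set A := stmt14inside g X₁ with hA
  set B := stmt14inside g X₂ with hB
  have hUsub : A ∪ B ⊆ stmt14inside g (X₁ ∪ X₂) :=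
    union_subset (stmt14_inside_mono subset_union_left)
      (stmt14_inside_mono subset_union_right)
  have he₀U : e₀ ∈ stmt14inside g (X₁ ∪ X₂) := by
    rw [stmt14_mem_inside]
    intro x hx
    rcases hmem x hx with h | h | h
    · exact h ▸ mem_union_left _ hα₁
    · exact h ▸ mem_union_right _ hc₁₂
    · exact h ▸ mem_union_left _ hc₂₁
  have he₀A : e₀ ∉ A := by
    rw [hA, stmt14_mem_inside]
    exact fun h => hc₁₁ (h c₁ hc₁mem)
  have he₀B : e₀ ∉ B := by
    rw [hB, stmt14_mem_inside]
    exact fun h => hc₂₂ (h c₂ hc₂mem)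
  have hss : A ∪ B ⊂ stmt14inside g (X₁ ∪ X₂) := by
    rw [Finset.ssubset_iff_of_subset hUsub]
    exact ⟨e₀, he₀U, by simp [he₀A, he₀B]⟩
  have hcu : (A ∪ B).card < (stmt14inside g (X₁ ∪ X₂)).card := card_lt_card hss
  have hIsub : A ∩ B ⊆ stmt14inside g (X₁ ∩ X₂) := by
    intro e he
    rw [stmt14_mem_inside]
    rw [mem_inter, hA, hB, stmt14_mem_inside, stmt14_mem_inside] at he
    exact fun x hx => mem_inter.mpr ⟨he.1 x hx, he.2 x hx⟩
  have hci : (A ∩ B).card ≤ (stmt14inside g (X₁ ∩ X₂)).card := card_le_card hIsub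
  have hinvU := hInv (X₁ ∪ X₂) ⟨α, mem_union_left _ hα₁⟩
  have hinvI := hInv (X₁ ∩ X₂) ⟨α, mem_inter.mpr ⟨hα₁, hα₂⟩⟩
  have hAB := Finset.card_union_add_card_inter A B
  have hXX := Finset.card_union_add_card_inter X₁ X₂
  omega

variable [DecidableEq E]

/-- Shrinking `e₀` to `{α, c₂}` (dropping `c₁`) keeps the invariant provided
there is no tight blocker. -/
lemma stmt14_shrink_one {g : E → Multiset V} (hInv : Stmt14Inv g) {e₀ : E} {α c₁ c₂ : V}
    (hmem : ∀ x ∈ g e₀, x = α ∨ x = c₁ ∨ x = c₂)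
    (hnb : ¬ ∃ X : Finset V, α ∈ X ∧ c₂ ∈ X ∧ c₁ ∉ X ∧
      (stmt14inside g X).card + 1 = X.card) :
    Stmt14Inv (Function.update g e₀ {α, c₂}) := by
  classical
  intro X hX
  by_cases he₀X : ∀ x ∈ g e₀, x ∈ X
  · have hsub : stmt14inside (Function.update g e₀ {α, c₂}) X ⊆ stmt14inside g X := by
      intro e he
      rw [stmt14_mem_inside] at he ⊢
      rcases eq_or_ne e e₀ with rfl | hne
      · exact he₀X
      · rwa [Function.update_of_ne hne] at he
    exact le_trans (Nat.add_le_add_right (card_le_card hsub) 1) (hInv X hX)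
  · by_cases hm : α ∈ X ∧ c₂ ∈ X
    · have hc₁X : c₁ ∉ X := by
        intro h
        refine he₀X (fun x hx => ?_)
        rcases hmem x hx with rfl | rfl | rfl
        exacts [hm.1, h, hm.2]
      have htight : ¬((stmt14inside g X).card + 1 = X.card) :=
        fun ht => hnb ⟨X, hm.1, hm.2, hc₁X, ht⟩
      have hsub : stmt14inside (Function.update g e₀ {α, c₂}) X ⊆
          insert e₀ (stmt14inside g X) := by
        intro e he
        rcases eq_or_ne e e₀ with rfl | hne
        · exact mem_insert_self _ _
        · apply mem_insert_of_mem
          rw [stmt14_mem_inside] at he ⊢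
          rwa [Function.update_of_ne hne] at he
      have h1 : (stmt14inside (Function.update g e₀ {α, c₂}) X).card ≤
          (stmt14inside g X).card + 1 :=
        le_trans (card_le_card hsub) (card_insert_le _ _)
      have h2 := hInv X hX
      omega
    · have hsub : stmt14inside (Function.update g e₀ {α, c₂}) X ⊆ stmt14inside g X := by
        intro e he
        rw [stmt14_mem_inside] at he
        rcases eq_or_ne e e₀ with rfl | hne
        · exfalso
          rw [Function.update_self] at he
          exact hm ⟨he α (by simp), he c₂ (by simp)⟩
        · rw [stmt14_mem_inside]
          rwa [Function.update_of_ne hne] at he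
      exact le_trans (Nat.add_le_add_right (card_le_card hsub) 1) (hInv X hX)

/-- One step of the shrinking process. -/
lemma stmt14_step {g : E → Multiset V} (hInv : Stmt14Inv g) (anch : E → Option V)
    (hanch : ∀ e v, anch e = some v → v ∈ g e) {e₀ : E}
    (h3 : Multiset.card (g e₀) = 3) :
    ∃ m : Multiset V, m ≤ g e₀ ∧ Multiset.card m = 2 ∧
      (∀ v, anch e₀ = some v → v ∈ m) ∧ Stmt14Inv (Function.update g e₀ m) := by
  classical
  set s := (g e₀).toFinset with hs
  have hsle : s.card ≤ 3 := le_trans (Multiset.toFinset_card_le _) (le_of_eq h3)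
  have hgne : g e₀ ≠ 0 := by
    intro h; rw [h] at h3; simp at h3
  have hs0 : s.Nonempty := by
    obtain ⟨x, hx⟩ := Multiset.exists_mem_of_ne_zero hgne
    exact ⟨x, Multiset.mem_toFinset.mpr hx⟩
  have hcard_dedup : Multiset.card (g e₀).dedup = s.card := rfl
  by_cases hs3 : s.card = 3
  · set α₀ := if h : ∃ v, anch e₀ = some v then h.choose else hs0.choose with hα₀def
    have hα₀g : α₀ ∈ g e₀ := by
      rw [hα₀def]; split_ifs with h
      · exact hanch e₀ h.choose h.choose_spec
      · exact Multiset.mem_toFinset.mp hs0.choose_spec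
    have hα₀s : α₀ ∈ s := Multiset.mem_toFinset.mpr hα₀g
    have hanchα : ∀ v, anch e₀ = some v → v = α₀ := by
      intro v hv
      have hex : ∃ v, anch e₀ = some v := ⟨v, hv⟩
      rw [hα₀def, dif_pos hex]
      exact Option.some_inj.mp (hv.symm.trans hex.choose_spec)
    have hecard : (s.erase α₀).card = 2 := by
      rw [card_erase_of_mem hα₀s]; omega
    obtain ⟨c₁, c₂, hne, hcc⟩ := card_eq_two.mp hecard
    have hc₁e : c₁ ∈ s.erase α₀ := by rw [hcc]; exact mem_insert_self _ _
    have hc₂e : c₂ ∈ s.erase α₀ := by rw [hcc]; simp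
    obtain ⟨hc₁α, hc₁s⟩ := mem_erase.mp hc₁e
    obtain ⟨hc₂α, hc₂s⟩ := mem_erase.mp hc₂e
    have hc₁g : c₁ ∈ g e₀ := Multiset.mem_toFinset.mp hc₁s
    have hc₂g : c₂ ∈ g e₀ := Multiset.mem_toFinset.mp hc₂s
    have htri : ∀ x ∈ g e₀, x = α₀ ∨ x = c₁ ∨ x = c₂ := by
      intro x hx
      have hxs : x ∈ s := Multiset.mem_toFinset.mpr hx
      by_cases hxα : x = α₀
      · exact Or.inl hxα
      · have hxe : x ∈ s.erase α₀ := mem_erase.mpr ⟨hxα, hxs⟩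
        rw [hcc, mem_insert, mem_singleton] at hxe
        exact Or.inr hxe
    by_cases hB₁ : ∃ X : Finset V, α₀ ∈ X ∧ c₂ ∈ X ∧ c₁ ∉ X ∧
        (stmt14inside g X).card + 1 = X.card
    · have hB₂ : ¬ ∃ X : Finset V, α₀ ∈ X ∧ c₁ ∈ X ∧ c₂ ∉ X ∧
          (stmt14inside g X).card + 1 = X.card := by
        rintro ⟨X₂, hx1, hx2, hx3, hx4⟩
        obtain ⟨X₁, hy1, hy2, hy3, hy4⟩ := hB₁
        exact stmt14_exchange hInv htri hc₁g hc₂g hy1 hy2 hy3 hx1 hx2 hx3 hy4 hx4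
      have htri' : ∀ x ∈ g e₀, x = α₀ ∨ x = c₂ ∨ x = c₁ := by
        intro x hx
        rcases htri x hx with h | h | h
        exacts [Or.inl h, Or.inr (Or.inr h), Or.inr (Or.inl h)]
      refine ⟨{α₀, c₁}, stmt14_pair_le hα₀g hc₁g (Ne.symm hc₁α), by simp, ?_,
        stmt14_shrink_one hInv htri' hB₂⟩
      intro v hv; rw [hanchα v hv]; simp
    · refine ⟨{α₀, c₂}, stmt14_pair_le hα₀g hc₂g (Ne.symm hc₂α), by simp, ?_,
        stmt14_shrink_one hInv htri hB₁⟩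
      intro v hv; rw [hanchα v hv]; simp
  · by_cases hs2 : s.card = 2
    · refine ⟨(g e₀).dedup, Multiset.dedup_le _, by rw [hcard_dedup, hs2], ?_, ?_⟩
      · intro v hv; exact Multiset.mem_dedup.mpr (hanch e₀ v hv)
      · intro X hX
        have heq : stmt14inside (Function.update g e₀ (g e₀).dedup) X =
            stmt14inside g X := by
          ext e; rw [stmt14_mem_inside, stmt14_mem_inside]
          rcases eq_or_ne e e₀ with rfl | hne
          · rw [Function.update_self]
            constructor
            · intro h x hx; exact h x (Multiset.mem_dedup.mpr hx)
            · intro h x hx; exact h x (Multiset.mem_dedup.mp hx)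
          · rw [Function.update_of_ne hne]
        rw [heq]; exact hInv X hX
    · exfalso
      have hs1 : s.card = 1 := le_antisymm (by omega) (card_pos.mpr hs0)
      have he₀ : e₀ ∈ stmt14inside g s :=
        stmt14_mem_inside.mpr (fun x hx => Multiset.mem_toFinset.mpr hx)
      have h1 := hInv s hs0
      have h2 : 1 ≤ (stmt14inside g s).card := card_pos.mpr ⟨e₀, he₀⟩
      omega

/-- The full shrinking process. -/
lemma stmt14_process (anch : E → Option V) :
    ∀ (k : ℕ) (g : E → Multiset V),
    (∀ e, Multiset.card (g e) = 2 ∨ Multiset.card (g e) = 3) → Stmt14Inv g →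
    (∀ e v, anch e = some v → v ∈ g e) →
    (univ.filter (fun e => Multiset.card (g e) = 3)).card = k →
    ∃ g' : E → Multiset V, (∀ e, g' e ≤ g e) ∧ (∀ e, Multiset.card (g' e) = 2) ∧
      Stmt14Inv g' ∧ (∀ e v, anch e = some v → v ∈ g' e) := by
  intro k
  induction k with
  | zero =>
    intro g hcards hInv hanch hk
    refine ⟨g, fun e => le_refl _, fun e => ?_, hInv, hanch⟩
    rcases hcards e with h | h
    · exact h
    · exfalso
      have hmem : e ∈ univ.filter (fun e => Multiset.card (g e) = 3) := by simp [h]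
      rw [Finset.card_eq_zero.mp hk] at hmem
      simp at hmem
  | succ n ih =>
    intro g hcards hInv hanch hk
    have hne : (univ.filter (fun e => Multiset.card (g e) = 3)).Nonempty := by
      rw [← card_pos, hk]; omega
    obtain ⟨e₀, he₀⟩ := hne
    have h3 : Multiset.card (g e₀) = 3 := (mem_filter.mp he₀).2
    obtain ⟨m, hmle, hm2, hmanch, hmInv⟩ := stmt14_step hInv anch hanch h3
    set g₁ := Function.update g e₀ m with hg₁
    have hle₁ : ∀ e, g₁ e ≤ g e := by
      intro e
      rcases eq_or_ne e e₀ with rfl | hne'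
      · rw [hg₁, Function.update_self]; exact hmle
      · rw [hg₁, Function.update_of_ne hne']
    have hcards₁ : ∀ e, Multiset.card (g₁ e) = 2 ∨ Multiset.card (g₁ e) = 3 := by
      intro e
      rcases eq_or_ne e e₀ with rfl | hne'
      · rw [hg₁, Function.update_self]; exact Or.inl hm2
      · rw [hg₁, Function.update_of_ne hne']; exact hcards e
    have hanch₁ : ∀ e v, anch e = some v → v ∈ g₁ e := by
      intro e v hv
      rcases eq_or_ne e e₀ with rfl | hne'
      · rw [hg₁, Function.update_self]; exact hmanch v hv
      · rw [hg₁, Function.update_of_ne hne']; exact hanch e v hv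
    have hfilter : univ.filter (fun e => Multiset.card (g₁ e) = 3) =
        (univ.filter (fun e => Multiset.card (g e) = 3)).erase e₀ := by
      ext e
      rcases eq_or_ne e e₀ with rfl | hne'
      · simp [hg₁, Function.update_self, hm2]
      · simp [hg₁, Function.update_of_ne hne', hne']
    have hk₁ : (univ.filter (fun e => Multiset.card (g₁ e) = 3)).card = n := by
      rw [hfilter, card_erase_of_mem he₀, hk]; omega
    obtain ⟨g', h1, h2, h3', h4⟩ := ih g₁ hcards₁ hmInv hanch₁ hk₁
    exact ⟨g', fun e => le_trans (h1 e) (hle₁ e), h2, h3', h4⟩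

/-- A graph (all edges of size two) with `|V| - 1` edges satisfying the
hyperforest condition is connected. -/
lemma stmt14_connected (g : E → Multiset V) (hInv : Stmt14Inv g)
    (h2 : ∀ e, Multiset.card (g e) = 2)
    (hcardE : Fintype.card E = Fintype.card V - 1) : HConn g := by
  classical
  intro u v
  by_contra hno
  set C : Finset V :=
    @Finset.filter _ (fun w => Relation.ReflTransGen (HAdj g) u w) (Classical.decPred _) univ
    with hC
  have hmemC : ∀ w, w ∈ C ↔ Relation.ReflTransGen (HAdj g) u w := by
    intro w; simp [hC]
  have huC : u ∈ C := (hmemC u).mpr Relation.ReflTransGen.refl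
  have hvC : v ∉ C := fun h => hno ((hmemC v).mp h)
  have hCc : v ∈ univ \ C := mem_sdiff.mpr ⟨mem_univ v, hvC⟩
  have hdich : ∀ e : E, e ∈ stmt14inside g C ∨ e ∈ stmt14inside g (univ \ C) := by
    intro e
    obtain ⟨x, y, hxy⟩ := Multiset.card_eq_two.mp (h2 e)
    have hx : x ∈ g e := by rw [hxy]; simp
    have hy : y ∈ g e := by rw [hxy]; simp
    have hmem : ∀ z ∈ g e, z = x ∨ z = y := by
      intro z hz; rw [hxy] at hz
      rcases Multiset.mem_cons.mp hz with h | h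
      · exact Or.inl h
      · exact Or.inr (Multiset.mem_singleton.mp h)
    have hadjxy : HAdj g x y := ⟨e, hx, hy⟩
    have hadjyx : HAdj g y x := ⟨e, hy, hx⟩
    by_cases hxC : x ∈ C
    · left
      rw [stmt14_mem_inside]
      intro z hz
      rcases hmem z hz with rfl | rfl
      · exact hxC
      · exact (hmemC z).mpr (((hmemC x).mp hxC).tail hadjxy)
    · right
      rw [stmt14_mem_inside]
      intro z hz
      have hyC : y ∉ C := by
        intro hyC
        exact hxC ((hmemC x).mpr (((hmemC y).mp hyC).tail hadjyx))
      rcases hmem z hz with rfl | rfl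
      · exact mem_sdiff.mpr ⟨mem_univ _, hxC⟩
      · exact mem_sdiff.mpr ⟨mem_univ _, hyC⟩
  have hdisj' : Disjoint (stmt14inside g C) (stmt14inside g (univ \ C)) := by
    rw [disjoint_left]
    intro e h1' h2'
    rw [stmt14_mem_inside] at h1' h2'
    obtain ⟨x, hx⟩ := Multiset.card_pos_iff_exists_mem.mp (by rw [h2 e]; norm_num)
    exact (mem_sdiff.mp (h2' x hx)).2 (h1' x hx)
  have hcover : stmt14inside g C ∪ stmt14inside g (univ \ C) = univ := by
    apply eq_univ_of_forall
    intro e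
    rcases hdich e with h | h
    · exact mem_union_left _ h
    · exact mem_union_right _ h
  have hcards : (stmt14inside g C).card + (stmt14inside g (univ \ C)).card =
      Fintype.card E := by
    rw [← card_union_of_disjoint hdisj', hcover, card_univ]
  have hinv1 := hInv C ⟨u, huC⟩
  have hinv2 := hInv (univ \ C) ⟨v, hCc⟩
  have hCle : C.card ≤ Fintype.card V := by
    rw [← card_univ]; exact card_le_card (subset_univ C)
  have hcompl : C.card + (univ \ C).card = Fintype.card V := by
    rw [card_sdiff_of_subset (subset_univ C), card_univ]
    omega
  have hV : 1 ≤ Fintype.card V := Fintype.card_pos_iff.mpr ⟨u⟩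
  omega

/-- Every vertex keeps positive degree. -/
lemma stmt14_covered (g : E → Multiset V) (hInv : Stmt14Inv g)
    (hcardE : Fintype.card E = Fintype.card V - 1)
    (v : V) (hE : Nonempty E) : ∃ e, v ∈ g e := by
  classical
  by_contra hnone
  push_neg at hnone
  have hall : ∀ e, e ∈ stmt14inside g (univ.erase v) := by
    intro e
    rw [stmt14_mem_inside]
    intro x hx
    rcases eq_or_ne x v with rfl | hne
    · exact absurd hx (hnone e)
    · exact mem_erase.mpr ⟨hne, mem_univ x⟩
  have h1 : (stmt14inside g (univ.erase v)).card = Fintype.card E := by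
    rw [← card_univ]
    exact le_antisymm (card_le_card (subset_univ _)) (card_le_card (fun e _ => hall e))
  have hEpos : 1 ≤ Fintype.card E := Fintype.card_pos_iff.mpr hE
  have hVpos : 2 ≤ Fintype.card V := by omega
  have hne : (univ.erase v).Nonempty := by
    rw [← card_pos, card_erase_of_mem (mem_univ v), card_univ]; omega
  have h2 := hInv (univ.erase v) hne
  rw [card_erase_of_mem (mem_univ v), card_univ] at h2
  omega



noncomputable def triplesAt (edges : E → Multiset V) (v : V) : Finset E :=
  @Finset.filter _ (fun e => Multiset.card (edges e) = 3 ∧ v ∈ edges e)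
    (Classical.decPred _) univ

noncomputable def pairsAt (edges : E → Multiset V) (v : V) : Finset E :=
  @Finset.filter _ (fun e => Multiset.card (edges e) = 2 ∧ v ∈ edges e)
    (Classical.decPred _) univ

noncomputable def degAt (edges : E → Multiset V) (v : V) : Finset E :=
  @Finset.filter _ (fun e => v ∈ edges e) (Classical.decPred _) univ

/-- number of anchors demanded at `v`. -/
noncomputable def demand (edges : E → Multiset V) (v : V) : ℕ :=
  if 101 ≤ (degAt edges v).card
  then ((degAt edges v).card + 99) / 100 - (pairsAt edges v).card else 0

lemma mem_pairsAt {edges : E → Multiset V} {v : V} {e : E} :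
    e ∈ pairsAt edges v ↔ Multiset.card (edges e) = 2 ∧ v ∈ edges e := by
  simp [pairsAt]

lemma mem_degAt {edges : E → Multiset V} {v : V} {e : E} :
    e ∈ degAt edges v ↔ v ∈ edges e := by
  simp [degAt]

lemma mem_triplesAt {edges : E → Multiset V} {v : V} {e : E} :
    e ∈ triplesAt edges v ↔ Multiset.card (edges e) = 3 ∧ v ∈ edges e := by
  simp [triplesAt]

lemma pairs_add_triples (edges : E → Multiset V)
    (hsize : ∀ e, Multiset.card (edges e) = 2 ∨ Multiset.card (edges e) = 3) (v : V) :
    (pairsAt edges v).card + (triplesAt edges v).card = (degAt edges v).card := by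
  classical
  rw [← card_union_of_disjoint]
  · congr 1
    ext e
    simp only [pairsAt, triplesAt, degAt, mem_union, mem_filter, mem_univ, true_and]
    constructor
    · rintro (⟨_, h⟩ | ⟨_, h⟩) <;> exact h
    · intro h
      rcases hsize e with h2 | h3
      · exact Or.inl ⟨h2, h⟩
      · exact Or.inr ⟨h3, h⟩
  · rw [disjoint_left]
    intro e h1 h2
    simp only [pairsAt, triplesAt, mem_filter] at h1 h2
    omega

lemma fifty_demand (edges : E → Multiset V)
    (hsize : ∀ e, Multiset.card (edges e) = 2 ∨ Multiset.card (edges e) = 3) (v : V) :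
    50 * demand edges v ≤ (triplesAt edges v).card := by
  have h := pairs_add_triples edges hsize v
  rw [demand]
  split_ifs with h101
  · omega
  · omega

/-- The Hall condition for anchor demands. -/
lemma stmt14_hall (edges : E → Multiset V)
    (hsize : ∀ e, Multiset.card (edges e) = 2 ∨ Multiset.card (edges e) = 3) :
    ∀ s : Finset ((v : V) × Fin (demand edges v)),
      s.card ≤ (s.biUnion (fun x => triplesAt edges x.1)).card := by
  classical
  intro s
  set S := s.image Sigma.fst with hS
  have h1 : s.card ≤ ∑ v ∈ S, demand edges v := by
    have hsub : s ⊆ S.sigma (fun v => (univ : Finset (Fin (demand edges v)))) := by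
      intro x hx; rw [mem_sigma]; exact ⟨mem_image_of_mem _ hx, mem_univ _⟩
    calc s.card ≤ (S.sigma (fun v => (univ : Finset (Fin (demand edges v))))).card :=
          card_le_card hsub
      _ = ∑ v ∈ S, demand edges v := by rw [card_sigma]; simp
  have h4 : s.biUnion (fun x => triplesAt edges x.1) = S.biUnion (triplesAt edges) := by
    ext e
    simp only [mem_biUnion]
    constructor
    · rintro ⟨x, hx, he⟩; exact ⟨x.1, mem_image_of_mem _ hx, he⟩
    · rintro ⟨v, hv, he⟩
      obtain ⟨x, hx, rfl⟩ := mem_image.mp hv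
      exact ⟨x, hx, he⟩
  have h2 : ∑ v ∈ S, (triplesAt edges v).card ≤ 3 * (S.biUnion (triplesAt edges)).card := by
    have hcf : ∀ v, (triplesAt edges v).card =
        ∑ e ∈ univ, if e ∈ triplesAt edges v then 1 else 0 := by
      intro v
      rw [sum_ite_mem, univ_inter, sum_const, smul_eq_mul, mul_one]
    calc ∑ v ∈ S, (triplesAt edges v).card
        = ∑ v ∈ S, ∑ e ∈ univ, if e ∈ triplesAt edges v then 1 else 0 := by
          exact Finset.sum_congr rfl (fun v _ => hcf v)
      _ = ∑ e ∈ univ, ∑ v ∈ S, if e ∈ triplesAt edges v then 1 else 0 := sum_comm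
      _ = ∑ e ∈ univ, (S.filter (fun v => e ∈ triplesAt edges v)).card := by
          exact Finset.sum_congr rfl (fun e _ => (card_filter _ _).symm)
      _ ≤ ∑ e ∈ univ, if e ∈ S.biUnion (triplesAt edges) then 3 else 0 := by
          apply Finset.sum_le_sum
          intro e _
          by_cases heB : e ∈ S.biUnion (triplesAt edges)
          · rw [if_pos heB]
            have hsub : S.filter (fun v => e ∈ triplesAt edges v) ⊆ (edges e).toFinset := by
              intro v hv
              rw [mem_filter] at hv
              rw [Multiset.mem_toFinset]
              exact (mem_triplesAt.mp hv.2).2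
            calc (S.filter (fun v => e ∈ triplesAt edges v)).card
                ≤ (edges e).toFinset.card := card_le_card hsub
              _ ≤ Multiset.card (edges e) := Multiset.toFinset_card_le _
              _ ≤ 3 := by rcases hsize e with h | h <;> omega
          · rw [if_neg heB]
            simp only [Nat.le_zero, Finset.card_eq_zero, Finset.filter_eq_empty_iff]
            intro v hv he
            exact heB (mem_biUnion.mpr ⟨v, hv, he⟩)
      _ = ∑ e ∈ univ ∩ S.biUnion (triplesAt edges), 3 := sum_ite_mem _ _ _
      _ = 3 * (S.biUnion (triplesAt edges)).card := by
          rw [univ_inter, sum_const, smul_eq_mul, mul_comm]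
  have h3 : 50 * (∑ v ∈ S, demand edges v) ≤ ∑ v ∈ S, (triplesAt edges v).card := by
    rw [mul_sum]
    exact Finset.sum_le_sum (fun v _ => fifty_demand edges hsize v)
  have h5 : (s.biUnion (fun x => triplesAt edges x.1)).card =
      (S.biUnion (triplesAt edges)).card := by rw [h4]
  omega

lemma natcard_subtype {E' : Type} [Fintype E'] (P : E' → Prop) :
    Nat.card {e : E' // P e} = (@Finset.filter _ P (Classical.decPred _) univ).card := by
  classical
  rw [Nat.card_eq_fintype_card]
  exact Fintype.card_of_subtype _ (by simp)

/-- Edges anchored at `v`. -/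
noncomputable def anchoredAt (anch : E → Option V) (v : V) : Finset E :=
  @Finset.filter _ (fun e => anch e = some v) (Classical.decPred _) univ

lemma mem_anchoredAt {anch : E → Option V} {v : V} {e : E} :
    e ∈ anchoredAt anch v ↔ anch e = some v := by
  simp [anchoredAt]

/-- Existence of an anchor assignment. -/
lemma stmt14_anchors (edges : E → Multiset V)
    (hsize : ∀ e, Multiset.card (edges e) = 2 ∨ Multiset.card (edges e) = 3) :
    ∃ anch : E → Option V,
      (∀ e v, anch e = some v → Multiset.card (edges e) = 3 ∧ v ∈ edges e) ∧
      (∀ v, demand edges v ≤ (anchoredAt anch v).card) := by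
  classical
  obtain ⟨f, hfinj, hf⟩ :=
    (Finset.all_card_le_biUnion_card_iff_exists_injective
      (fun x : (v : V) × Fin (demand edges v) => triplesAt edges x.1)).mp
      (stmt14_hall edges hsize)
  refine ⟨fun e => if h : ∃ x, f x = e then some h.choose.1 else none, ?_, ?_⟩
  · intro e v hv
    replace hv : (if h : ∃ x, f x = e then some h.choose.1 else none) = some v := hv
    by_cases h : ∃ x, f x = e
    · rw [dif_pos h] at hv
      have hcv := Option.some_inj.mp hv
      have hft := hf h.choose
      rw [h.choose_spec] at hft
      have hm := mem_triplesAt.mp hft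
      exact ⟨hm.1, hcv ▸ hm.2⟩
    · rw [dif_neg h] at hv
      exact absurd hv (by simp)
  · intro v
    have hinj : Function.Injective (fun i : Fin (demand edges v) => f ⟨v, i⟩) := by
      intro i j hij
      have h2 := hfinj hij
      simpa using h2
    have himg : ((univ : Finset (Fin (demand edges v))).image (fun i => f ⟨v, i⟩)) ⊆
        anchoredAt (fun e => if h : ∃ x, f x = e then some h.choose.1 else none) v := by
      intro e he
      obtain ⟨i, _, rfl⟩ := mem_image.mp he
      rw [mem_anchoredAt]
      show (if h : ∃ x, f x = f ⟨v, i⟩ then some h.choose.1 else none) = some v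
      have hex : ∃ x, f x = f ⟨v, i⟩ := ⟨⟨v, i⟩, rfl⟩
      rw [dif_pos hex]
      have hch : hex.choose = ⟨v, i⟩ := hfinj hex.choose_spec
      rw [hch]
    calc demand edges v
        = ((univ : Finset (Fin (demand edges v))).image (fun i => f ⟨v, i⟩)).card := by
          rw [card_image_of_injective _ hinj, card_univ, Fintype.card_fin]
      _ ≤ _ := card_le_card himg


end Stmt14Aux

open Finset in
/-- a hypertree with hyperedges of size two or three can have each
size-three hyperedge shrunk to a size-two sub-edge so that the result is a
spanning tree `T'` with `deg_{T'}(v) ≥ deg_H(v)/100` at every vertex. -/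
theorem stmt14 (V E : Type) [Fintype V] [Fintype E] (edges : E → Multiset V)
    (htree : IsHypertree edges)
    (hsize : ∀ e, (edges e).card = 2 ∨ (edges e).card = 3) :
    ∃ edges' : E → Multiset V,
      (∀ e, edges' e ≤ edges e) ∧
      (∀ e, (edges' e).card = 2) ∧
      (∀ e, (edges e).card = 2 → edges' e = edges e) ∧
      HConn edges' ∧
      ∀ v : V,
        Nat.card {e : E // v ∈ edges e} ≤
          100 * Nat.card {e : E // v ∈ edges' e} := by
  classical
  obtain ⟨hcardE, hcov, hsubset⟩ := htree
  have hInv0 : Stmt14Inv edges := by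
    intro X hX
    have h := hsubset (X : Set V)
    have hl : Nat.card {e : E // ∀ x ∈ edges e, x ∈ (X : Set V)} =
        (stmt14inside edges X).card := by
      rw [natcard_subtype]
      rfl
    have hr : Nat.card (X : Set V) = X.card := by
      rw [Nat.card_coe_set_eq, Set.ncard_coe_finset]
    rw [hl, hr] at h
    have hX1 := card_pos.mpr hX
    omega
  obtain ⟨anch, hanchP, hanchC⟩ := stmt14_anchors edges hsize
  have hanch0 : ∀ e v, anch e = some v → v ∈ edges e :=
    fun e v hv => (hanchP e v hv).2
  obtain ⟨g', hle, hcard2, hInv', hanch'⟩ :=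
    stmt14_process anch _ edges hsize hInv0 hanch0 rfl
  have hpair : ∀ e, Multiset.card (edges e) = 2 → g' e = edges e := by
    intro e he
    exact Multiset.eq_of_le_of_card_le (hle e) (by rw [he, hcard2 e])
  refine ⟨g', hle, hcard2, hpair, stmt14_connected g' hInv' hcard2 hcardE, ?_⟩
  intro v
  have hLcard : Nat.card {e : E // v ∈ edges e} = (degAt edges v).card := by
    rw [natcard_subtype]; rfl
  have hRcard : Nat.card {e : E // v ∈ g' e} = (degAt g' v).card := by
    rw [natcard_subtype]; rfl
  rw [hLcard, hRcard]
  by_cases h0 : (degAt edges v).card = 0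
  · rw [h0]; exact Nat.zero_le _
  · have hEne : Nonempty E := by
      obtain ⟨e, _⟩ := card_pos.mp (Nat.pos_of_ne_zero h0)
      exact ⟨e⟩
    have hdeg1 : 1 ≤ (degAt g' v).card := by
      obtain ⟨e, he⟩ := stmt14_covered g' hInv' hcardE v hEne
      refine card_pos.mpr ⟨e, ?_⟩
      simp [degAt, he]
    by_cases hbig : 101 ≤ (degAt edges v).card
    · have hsubP : pairsAt edges v ⊆ degAt g' v := by
        intro e he
        have hpe : Multiset.card (edges e) = 2 ∧ v ∈ edges e := mem_pairsAt.mp he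
        have hge : g' e = edges e := hpair e hpe.1
        simp [degAt, hge, hpe.2]
      have hsubA : anchoredAt anch v ⊆ degAt g' v := by
        intro e he
        rw [mem_anchoredAt] at he
        have : v ∈ g' e := hanch' e v he
        simp [degAt, this]
      have hdisjPA : Disjoint (pairsAt edges v) (anchoredAt anch v) := by
        rw [disjoint_left]
        intro e h1 h2
        have hp2 : Multiset.card (edges e) = 2 := (mem_pairsAt.mp h1).1
        rw [mem_anchoredAt] at h2
        have := (hanchP e v h2).1
        omega
      have hunion : (pairsAt edges v).card + (anchoredAt anch v).card ≤
          (degAt g' v).card := by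
        rw [← card_union_of_disjoint hdisjPA]
        exact card_le_card (union_subset hsubP hsubA)
      have hdemC := hanchC v
      have hpt := pairs_add_triples edges hsize v
      have hdemdef : demand edges v =
          ((degAt edges v).card + 99) / 100 - (pairsAt edges v).card := by
        rw [demand, if_pos hbig]
      omega
    · omega
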